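/- Let q be a prime power and let C be an arbitrary F_q-linear code of length n (an F_q-linear subspace of F_q^n). Then there exist a positive integer N and a cyclic code D of length N over F_q such that C can be obtained from D by a finite sequence of operations, each of which is either a puncturing or a shortening at a single coordinate position. -/

import Mathlib

set_option maxHeartbeats 1000000

open Polynomial

/-- A single step: puncturing or shortening a linear code of length `n+1`
at one coordinate position, yielding a linear code of length `n`. -/
inductive CodeStep (F : Type*) [Field F] :
    ∀ {m n : ℕ}, Submodule F (Fin m → F) → Submodule F (Fin n → F) → Prop
  | puncture {n : ℕ} (i : Fin (n + 1)) (D : Submodule F (Fin (n + 1) → F)) :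
      CodeStep F D (D.map (LinearMap.funLeft F F i.succAbove))
  | shorten {n : ℕ} (i : Fin (n + 1)) (D : Submodule F (Fin (n + 1) → F)) :
      CodeStep F D
        ((D ⊓ LinearMap.ker (LinearMap.proj i)).map (LinearMap.funLeft F F i.succAbove))

/-- `ObtainedFrom F D C` : the code `C` can be obtained from the code `D` by a finite
sequence of puncturing and/or shortening operations at single coordinate positions. -/
inductive ObtainedFrom (F : Type*) [Field F] :
    ∀ {m n : ℕ}, Submodule F (Fin m → F) → Submodule F (Fin n → F) → Prop
  | refl {n : ℕ} (C : Submodule F (Fin n → F)) : ObtainedFrom F C C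
  | tail {m k n : ℕ} {D : Submodule F (Fin m → F)} {E : Submodule F (Fin k → F)}
      {C : Submodule F (Fin n → F)} :
      ObtainedFrom F D E → CodeStep F E C → ObtainedFrom F D C

section Aux

variable {F : Type*} [Field F]

theorem ObtainedFrom.head' {m k n : ℕ} {D : Submodule F (Fin m → F)}
    {E : Submodule F (Fin k → F)} {C : Submodule F (Fin n → F)}
    (h1 : CodeStep F D E) (h2 : ObtainedFrom F E C) : ObtainedFrom F D C := by
  revert h1
  induction h2 with
  | refl C => exact fun h1 => .tail (.refl D) h1
  | tail h s ih => exact fun h1 => .tail (ih h1) s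

variable {V : Type*} [AddCommGroup V] [Module F V]

/-- The code cut out by the linear condition `∑ i, c i • w i ∈ U`. -/
noncomputable def codeOf {m : ℕ} (w : Fin m → V) (U : Submodule F V) :
    Submodule F (Fin m → F) :=
  U.comap (Fintype.linearCombination F w)

theorem mem_codeOf {m : ℕ} {w : Fin m → V} {U : Submodule F V} {c : Fin m → F} :
    c ∈ codeOf w U ↔ ∑ i, c i • w i ∈ U := Iff.rfl

theorem codeOf_shorten {m : ℕ} (w : Fin (m + 1) → V) (U : Submodule F V) (i : Fin (m + 1)) :
    ((codeOf w U ⊓ LinearMap.ker (LinearMap.proj i)).map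
        (LinearMap.funLeft F F i.succAbove)) =
      codeOf (fun t => w (i.succAbove t)) U := by
  ext c
  constructor
  · rintro ⟨d, hdmem, rfl⟩
    obtain ⟨hd, hdi⟩ := Submodule.mem_inf.mp hdmem
    rw [LinearMap.mem_ker, LinearMap.proj_apply] at hdi
    have hd' : ∑ j, d j • w j ∈ U := hd
    have hs := Fin.sum_univ_succAbove (fun j => d j • w j) i
    rw [hdi, zero_smul, zero_add] at hs
    show (∑ t, (LinearMap.funLeft F F i.succAbove d) t • w (i.succAbove t)) ∈ U
    have heq : (∑ t, (LinearMap.funLeft F F i.succAbove d) t • w (i.succAbove t))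
        = ∑ t, d (i.succAbove t) • w (i.succAbove t) := by
      refine Finset.sum_congr rfl fun t _ => ?_
      rw [LinearMap.funLeft_apply]
    rw [heq, ← hs]
    exact hd'
  · intro hc
    have hc' : ∑ t, c t • w (i.succAbove t) ∈ U := hc
    set d : Fin (m + 1) → F := i.insertNth (0 : F) c with hdef
    have hdi : d i = 0 := by rw [hdef]; exact Fin.insertNth_apply_same (α := fun _ => F) i (0 : F) c
    have hds : ∀ t, d (i.succAbove t) = c t := by
      intro t; rw [hdef]; exact Fin.insertNth_apply_succAbove (α := fun _ => F) i (0 : F) c t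
    refine ⟨d, Submodule.mem_inf.mpr ⟨?_, ?_⟩, ?_⟩
    · show (∑ j, d j • w j) ∈ U
      rw [Fin.sum_univ_succAbove (fun j => d j • w j) i, hdi, zero_smul, zero_add]
      have heq : (∑ t, d (i.succAbove t) • w (i.succAbove t))
          = ∑ t, c t • w (i.succAbove t) := by
        refine Finset.sum_congr rfl fun t _ => ?_
        rw [hds t]
      rw [heq]
      exact hc'
    · rw [LinearMap.mem_ker, LinearMap.proj_apply]
      exact hdi
    · ext t
      rw [LinearMap.funLeft_apply]
      exact hds t

theorem codeOf_puncture {m : ℕ} (w : Fin (m + 1) → V) (U : Submodule F V) (i : Fin (m + 1)) :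
    (codeOf w U).map (LinearMap.funLeft F F i.succAbove) =
      codeOf (fun t => w (i.succAbove t)) (U ⊔ Submodule.span F {w i}) := by
  ext c
  constructor
  · rintro ⟨d, hd, rfl⟩
    have hd' : ∑ j, d j • w j ∈ U := hd
    show (∑ t, (LinearMap.funLeft F F i.succAbove d) t • w (i.succAbove t))
        ∈ U ⊔ Submodule.span F {w i}
    have hs := Fin.sum_univ_succAbove (fun j => d j • w j) i
    have heq : (∑ t, (LinearMap.funLeft F F i.succAbove d) t • w (i.succAbove t))
        = (∑ j, d j • w j) - d i • w i := by
      rw [hs]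
      have heq2 : (∑ t, (LinearMap.funLeft F F i.succAbove d) t • w (i.succAbove t))
          = ∑ t, d (i.succAbove t) • w (i.succAbove t) := by
        refine Finset.sum_congr rfl fun t _ => ?_
        rw [LinearMap.funLeft_apply]
      rw [heq2]
      abel
    rw [heq]
    exact Submodule.sub_mem _ (Submodule.mem_sup_left hd')
      (Submodule.mem_sup_right (Submodule.smul_mem _ _ (Submodule.mem_span_singleton_self _)))
  · intro hc
    have hc' : ∑ t, c t • w (i.succAbove t) ∈ U ⊔ Submodule.span F {w i} := hc
    obtain ⟨u, hu, v, hv, huv⟩ := Submodule.mem_sup.mp hc'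
    obtain ⟨a, rfl⟩ := Submodule.mem_span_singleton.mp hv
    set d : Fin (m + 1) → F := i.insertNth (-a) c with hdef
    have hdi : d i = -a := by rw [hdef]; exact Fin.insertNth_apply_same (α := fun _ => F) i (-a) c
    have hds : ∀ t, d (i.succAbove t) = c t := by
      intro t; rw [hdef]; exact Fin.insertNth_apply_succAbove (α := fun _ => F) i (-a) c t
    refine ⟨d, ?_, ?_⟩
    · show (∑ j, d j • w j) ∈ U
      rw [Fin.sum_univ_succAbove (fun j => d j • w j) i, hdi]
      have heq : (∑ t, d (i.succAbove t) • w (i.succAbove t))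
          = ∑ t, c t • w (i.succAbove t) := by
        refine Finset.sum_congr rfl fun t _ => ?_
        rw [hds t]
      rw [heq, ← huv]
      have : (-a) • w i + (u + a • w i) = u := by
        rw [neg_smul]; abel
      rw [this]
      exact hu
    · ext t
      rw [LinearMap.funLeft_apply]
      exact hds t

theorem strictMono_fin_le {p q : ℕ} (f : Fin p → Fin q) (hf : StrictMono f) :
    ∀ (k : ℕ) (h : k < p), k ≤ (f ⟨k, h⟩ : ℕ) := by
  intro k
  induction k with
  | zero => intro h; exact Nat.zero_le _
  | succ k ih =>
    intro h
    have hk : k < p := Nat.lt_of_succ_lt h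
    have h1 : f ⟨k, hk⟩ < f ⟨k + 1, h⟩ := hf (by simp [Fin.mk_lt_mk])
    have h2 : ((f ⟨k, hk⟩ : Fin q) : ℕ) < ((f ⟨k + 1, h⟩ : Fin q) : ℕ) := Fin.lt_def.mp h1
    have h3 := ih hk
    omega

theorem strictMono_fin_id {p : ℕ} (f : Fin p → Fin p) (hf : StrictMono f) (t : Fin p) :
    f t = t := by
  have hbij : Function.Bijective f := Finite.injective_iff_bijective.mp hf.injective
  obtain ⟨g, hgf, hfg⟩ := Function.bijective_iff_has_inverse.mp hbij
  have hg : StrictMono g := by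
    intro a b hab
    rcases lt_trichotomy (g a) (g b) with h | h | h
    · exact h
    · exact absurd (by rw [← hfg a, ← hfg b, h]) hab.ne
    · have h2 := hf h
      rw [hfg, hfg] at h2
      exact absurd hab (not_lt.mpr h2.le)
  have h1 : (t : ℕ) ≤ ((f t : Fin p) : ℕ) := by
    have := strictMono_fin_le f hf t t.isLt
    simpa using this
  have h2 : ((f t : Fin p) : ℕ) ≤ (t : ℕ) := by
    have h3 := strictMono_fin_le g hg (f t) (f t).isLt
    simp only [Fin.eta] at h3
    rw [hgf] at h3
    exact h3
  exact Fin.ext (le_antisymm h2 h1)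

theorem master {n : ℕ} (m : ℕ) :
    ∀ (w : Fin (n + m) → V) (U Us : Submodule F V) (keep : Fin n → Fin (n + m)),
      StrictMono keep → U ≤ Us →
      Us ≤ U ⊔ Submodule.span F {x | ∃ j, (∀ t, keep t ≠ j) ∧ w j = x ∧ x ∈ Us} →
      ObtainedFrom F (codeOf w U) (codeOf (fun t => w (keep t)) Us) := by
  induction m with
  | zero =>
    intro w U Us keep hk hle hsp
    have hsurj : Function.Surjective keep := by
      have hbij : Function.Bijective (keep : Fin n → Fin n) :=
        Finite.injective_iff_bijective.mp hk.injective
      exact hbij.2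
    have hempty : {x | ∃ j, (∀ t, keep t ≠ j) ∧ w j = x ∧ x ∈ Us} = (∅ : Set V) := by
      ext x
      simp only [Set.mem_setOf_eq, Set.mem_empty_iff_false, iff_false]
      rintro ⟨j, hj, -, -⟩
      obtain ⟨t, ht⟩ := hsurj j
      exact hj t ht
    rw [hempty, Submodule.span_empty, sup_bot_eq] at hsp
    have hUeq : U = Us := le_antisymm hle hsp
    have hwk : (fun t => w (keep t)) = w := by
      funext t
      rw [strictMono_fin_id (keep : Fin n → Fin n) hk t]
    rw [hwk, ← hUeq]
    exact ObtainedFrom.refl _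
  | succ m ih =>
    intro w U Us keep hk hle hsp
    have hex : ∃ j : Fin (n + (m + 1)), ∀ t, keep t ≠ j := by
      by_contra hcon
      push_neg at hcon
      have hsurj : Function.Surjective keep := fun j => hcon j
      have hcard := Fintype.card_le_of_surjective keep hsurj
      simp only [Fintype.card_fin] at hcard
      omega
    obtain ⟨j, hj⟩ := hex
    have hkt : ∀ t, ∃ z : Fin (n + m), j.succAbove z = keep t := fun t =>
      Fin.exists_succAbove_eq (hj t)
    choose keep' hkeep' using hkt
    have hk' : StrictMono keep' := by
      intro a b hab
      have h2 := hk hab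
      rw [← hkeep' a, ← hkeep' b] at h2
      exact (Fin.strictMono_succAbove j).lt_iff_lt.mp h2
    have hwkeq : (fun t => w (j.succAbove (keep' t))) = fun t => w (keep t) := by
      funext t
      rw [hkeep' t]
    by_cases hwj : w j ∈ Us
    · have step : CodeStep F (codeOf w U) ((codeOf w U).map (LinearMap.funLeft F F j.succAbove)) :=
        CodeStep.puncture j (codeOf w U)
      rw [codeOf_puncture] at step
      refine ObtainedFrom.head' step ?_
      have hres := ih (fun t => w (j.succAbove t)) (U ⊔ Submodule.span F {w j}) Us keep' hk'
        (sup_le hle ((Submodule.span_singleton_le_iff_mem _ _).mpr hwj)) ?_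
      · rwa [hwkeq] at hres
      · intro x hx
        have h1 := hsp hx
        have hSsub : {x | ∃ j', (∀ t, keep t ≠ j') ∧ w j' = x ∧ x ∈ Us}
            ⊆ ({w j} : Set V) ∪ {x | ∃ z, (∀ t, keep' t ≠ z) ∧ w (j.succAbove z) = x ∧ x ∈ Us} := by
          rintro y ⟨j', hj', rfl, hyU⟩
          by_cases hjj : j' = j
          · subst hjj; exact Or.inl rfl
          · obtain ⟨z, hz⟩ := Fin.exists_succAbove_eq hjj
            exact Or.inr ⟨z, fun t hzt => hj' t (by rw [← hkeep' t, hzt, hz]),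
              by rw [hz], hyU⟩
        have hle2 : U ⊔ Submodule.span F {x | ∃ j', (∀ t, keep t ≠ j') ∧ w j' = x ∧ x ∈ Us}
            ≤ (U ⊔ Submodule.span F {w j}) ⊔ Submodule.span F
              {x | ∃ z, (∀ t, keep' t ≠ z) ∧ w (j.succAbove z) = x ∧ x ∈ Us} := by
          refine sup_le (le_sup_of_le_left le_sup_left) ?_
          refine le_trans (Submodule.span_mono hSsub) ?_
          rw [Submodule.span_union]
          exact sup_le (le_sup_of_le_left le_sup_right) le_sup_right
        exact hle2 h1
    · have step : CodeStep F (codeOf w U)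
          (((codeOf w U) ⊓ LinearMap.ker (LinearMap.proj j)).map
            (LinearMap.funLeft F F j.succAbove)) :=
        CodeStep.shorten j (codeOf w U)
      rw [codeOf_shorten] at step
      refine ObtainedFrom.head' step ?_
      have hres := ih (fun t => w (j.succAbove t)) U Us keep' hk' hle ?_
      · rwa [hwkeq] at hres
      · intro x hx
        have h1 := hsp hx
        have hSsub : {x | ∃ j', (∀ t, keep t ≠ j') ∧ w j' = x ∧ x ∈ Us}
            ⊆ {x | ∃ z, (∀ t, keep' t ≠ z) ∧ w (j.succAbove z) = x ∧ x ∈ Us} := by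
          rintro y ⟨j', hj', rfl, hyU⟩
          have hjj : j' ≠ j := fun hh => hwj (hh ▸ hyU)
          obtain ⟨z, hz⟩ := Fin.exists_succAbove_eq hjj
          exact ⟨z, fun t hzt => hj' t (by rw [← hkeep' t, hzt, hz]), by rw [hz], hyU⟩
        exact (sup_le_sup_left (Submodule.span_mono hSsub) U) h1

end Aux

/-- A linear code of (positive) length `N + 1` is cyclic if it is closed under the
cyclic shift `(c₀, …, c_N) ↦ (c_N, c₀, …, c_{N-1})`. -/
def IsCyclicCode (F : Type*) [Field F] {N : ℕ} (D : Submodule F (Fin (N + 1) → F)) : Prop :=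
  ∀ c ∈ D, (fun i : Fin (N + 1) => c (i - 1)) ∈ D

/-- Any `F_q`-linear code `C` of length `n` can be obtained from some cyclic code `D`
of some positive length over `F_q` by a finite sequence of puncturings and/or
shortenings at single coordinate positions. -/
theorem any_linear_code_obtained_from_cyclic
    (F : Type*) [Field F] [Fintype F] (n : ℕ) (C : Submodule F (Fin n → F)) :
    ∃ (N : ℕ) (D : Submodule F (Fin (N + 1) → F)),
      IsCyclicCode F D ∧ ObtainedFrom F D C := by
  classical
  -- Build a finite field extension `K` of `F` with `finrank F K ≥ n + 1`.
  set p := ringChar F with hpdef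
  haveI hCF : CharP F p := ringChar.charP F
  obtain ⟨a, hp, hq⟩ := FiniteField.card F p
  set q := Fintype.card F with hqdef
  have hq1 : 1 < q := Fintype.one_lt_card
  set gp : F[X] := X ^ q ^ (n + 1) - X with hgpdef
  set K := gp.SplittingField with hKdef
  haveI : Module.Finite F K := inferInstance
  haveI : Finite K := Module.finite_of_finite F
  haveI : Fintype K := Fintype.ofFinite K
  haveI hCK : CharP K p := charP_of_injective_algebraMap (algebraMap F K).injective p
  have hpq : p ∣ q ^ (n + 1) := by
    have h1 : p ∣ q := by
      rw [hq]
      exact dvd_pow_self p (by exact_mod_cast a.ne_zero)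
    exact h1.trans (dvd_pow_self q (Nat.succ_ne_zero n))
  have hsep : (X ^ q ^ (n + 1) - X : F[X]).Separable := galois_poly_separable p _ hpq
  have hdeg : gp.natDegree = q ^ (n + 1) :=
    FiniteField.X_pow_card_pow_sub_X_natDegree_eq F (Nat.succ_ne_zero n) hq1
  have hcard1 : Fintype.card (gp.rootSet K) = q ^ (n + 1) := by
    rw [Polynomial.card_rootSet_eq_natDegree hsep (Polynomial.SplittingField.splits gp), hdeg]
  have hcardK : q ^ (n + 1) ≤ Fintype.card K := by
    rw [← hcard1]
    exact Fintype.card_le_of_injective _ Subtype.val_injective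
  have hrank : n + 1 ≤ Module.finrank F K := by
    have hc := Module.card_eq_pow_finrank (K := F) (V := K)
    rw [hc] at hcardK
    exact (Nat.pow_le_pow_iff_right hq1).mp hcardK
  -- generator of the units of K
  obtain ⟨g, hg⟩ := IsCyclic.exists_generator (α := Kˣ)
  set γ : K := (g : K) with hγdef
  set e := orderOf g with hedef
  have he1 : 1 ≤ e := orderOf_pos g
  have hγe : γ ^ e = 1 := by
    rw [hγdef, hedef, ← Units.val_pow_eq_pow_val, pow_orderOf_eq_one g, Units.val_one]
  have hγord : orderOf γ = e := by rw [hγdef, hedef]; exact orderOf_units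
  have hpow : ∀ x : K, x ≠ 0 → ∃ l, l < e ∧ γ ^ l = x := by
    intro x hx
    have hu : Units.mk0 x hx ∈ Submonoid.powers g := by
      rw [mem_powers_iff_mem_zpowers]
      exact hg _
    obtain ⟨k, hk⟩ := hu
    refine ⟨k % e, Nat.mod_lt _ he1, ?_⟩
    calc γ ^ (k % e) = ((g ^ (k % e) : Kˣ) : K) := by
          rw [hγdef, Units.val_pow_eq_pow_val]
      _ = ((g ^ k : Kˣ) : K) := by rw [hedef, pow_mod_orderOf]
      _ = x := by rw [show (g ^ k : Kˣ) = Units.mk0 x hx from hk, Units.val_mk0]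
  -- the quotient space and the surjection ψ : K → W
  set W := (Fin n → F) ⧸ C with hWdef
  set π := C.mkQ with hπdef
  haveI : FiniteDimensional F W := inferInstance
  have hδ : Module.finrank F W ≤ n := by
    have h1 : Module.finrank F W ≤ Module.finrank F (Fin n → F) := Submodule.finrank_quotient_le C
    have h2 : Module.finrank F (Fin n → F) = n := by
      rw [Module.finrank_fintype_fun_eq_card, Fintype.card_fin]
    omega
  set bK := Module.finBasis F K with hbKdef
  set bW := Module.finBasis F W with hbWdef
  set ψ : K →ₗ[F] W := bK.constr F
      (fun i => if h : (i : ℕ) < Module.finrank F W then bW ⟨i, h⟩ else 0) with hψdef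
  have hψb : ∀ i : Fin (Module.finrank F K), ψ (bK i) =
      if h : (i : ℕ) < Module.finrank F W then bW ⟨i, h⟩ else 0 := by
    intro i
    rw [hψdef]
    exact Module.Basis.constr_basis bK F _ i
  have hrange : LinearMap.range ψ = ⊤ := by
    rw [← top_le_iff, ← bW.span_eq, Submodule.span_le]
    rintro y ⟨i, rfl⟩
    have hiM : (i : ℕ) < Module.finrank F K := lt_of_lt_of_le i.isLt (by omega)
    refine ⟨bK ⟨i, hiM⟩, ?_⟩
    rw [hψb ⟨i, hiM⟩, dif_pos i.isLt]
  have hsurj : Function.Surjective ψ := LinearMap.range_eq_top.mp hrange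
  have hker : LinearMap.ker ψ ≠ ⊥ := by
    intro hbot
    have hinj : Function.Injective ψ := LinearMap.ker_eq_bot.mp hbot
    have := LinearMap.finrank_le_finrank_of_injective hinj
    omega
  obtain ⟨u0, hu0mem, hu0ne⟩ := Submodule.exists_mem_ne_zero_of_ne_bot hker
  have hu0ker : ψ u0 = 0 := hu0mem
  -- choose exponents for the kept coordinates
  have hzt : ∀ t : Fin n, ∃ l, l < e ∧ ψ (γ ^ l) = π (Pi.single t 1) := by
    intro t
    obtain ⟨y, hy⟩ := hsurj (π (Pi.single t 1))
    by_cases hy0 : y = 0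
    · obtain ⟨l, hl, hγl⟩ := hpow u0 hu0ne
      refine ⟨l, hl, ?_⟩
      rw [hγl, hu0ker, ← hy, hy0, map_zero]
    · obtain ⟨l, hl, hγl⟩ := hpow y hy0
      exact ⟨l, hl, by rw [hγl, hy]⟩
  choose ll hll hψll using hzt
  -- set up lengths
  obtain ⟨m', hm'⟩ : ∃ m', (n + 1) * e = n + m' + 1 := by
    refine ⟨(n + 1) * e - n - 1, ?_⟩
    have h1 : n + 1 ≤ (n + 1) * e := Nat.le_mul_of_pos_right _ he1
    omega
  set N := n + m' with hNdef
  have hNe : N + 1 = (n + 1) * e := by omega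
  have hdvd : e ∣ N + 1 := by rw [hNe]; exact dvd_mul_left e (n + 1)
  set w : Fin (N + 1) → K := fun i => γ ^ (i : ℕ) with hwdef
  have hγN : γ ^ (N + 1) = 1 := by
    rw [← hγord] at hdvd
    exact orderOf_dvd_iff_pow_eq_one.mp hdvd
  refine ⟨N, codeOf w ⊥, ?_, ?_⟩
  · -- cyclicity
    intro c hc
    have hc' : ∑ i, c i • w i ∈ (⊥ : Submodule F K) := hc
    rw [Submodule.mem_bot] at hc'
    show ∑ i, (fun i : Fin (N + 1) => c (i - 1)) i • w i ∈ (⊥ : Submodule F K)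
    rw [Submodule.mem_bot]
    have hre : ∑ i : Fin (N + 1), c i • w (i + 1) = ∑ i : Fin (N + 1), c (i - 1) • w i := by
      rw [← Equiv.sum_comp (Equiv.addRight (1 : Fin (N + 1))) (fun i => c (i - 1) • w i)]
      refine Finset.sum_congr rfl fun i _ => ?_
      show c i • w (i + 1) = c ((i + 1) - 1) • w (i + 1)
      rw [add_sub_cancel_right]
    have hw1 : ∀ i : Fin (N + 1), w (i + 1) = γ * w i := by
      intro i
      rcases eq_or_ne i (Fin.last N) with rfl | hi
      · rw [hwdef]
        show γ ^ ((Fin.last N + 1 : Fin (N + 1)) : ℕ) = γ * γ ^ ((Fin.last N : Fin (N + 1)) : ℕ)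
        rw [Fin.last_add_one, Fin.val_zero, Fin.val_last, pow_zero, ← pow_succ']
        exact hγN.symm
      · rw [hwdef]
        show γ ^ ((i + 1 : Fin (N + 1)) : ℕ) = γ * γ ^ ((i : Fin (N + 1)) : ℕ)
        have hv : ((i + 1 : Fin (N + 1)) : ℕ) = (i : ℕ) + 1 := by
          rw [Fin.val_add_one]
          simp [hi]
        rw [hv, pow_succ']
    calc ∑ i, c (i - 1) • w i = ∑ i, c i • w (i + 1) := hre.symm
      _ = ∑ i, c i • (γ * w i) := Finset.sum_congr rfl fun i _ => by rw [hw1 i]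
      _ = γ * ∑ i, c i • w i := by
          rw [Finset.mul_sum]
          exact Finset.sum_congr rfl fun i _ => (mul_smul_comm (c i) γ (w i)).symm
      _ = 0 := by rw [hc', mul_zero]
  · -- obtained from
    have hkeepbound : ∀ t : Fin n, (t : ℕ) * e + ll t < N + 1 := by
      intro t
      have h1 : ll t < e := hll t
      have h2 : (t : ℕ) + 1 ≤ n := t.isLt
      have h3 : ((t : ℕ) + 1) * e ≤ n * e := Nat.mul_le_mul_right e h2
      have h4 : ((t : ℕ) + 1) * e = (t : ℕ) * e + e := by ring
      have h5 : n * e + e = (n + 1) * e := by ring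
      omega
    set keepf : Fin n → Fin (N + 1) :=
      fun t => ⟨(t : ℕ) * e + ll t, hkeepbound t⟩ with hkeepdef
    have hkmono : StrictMono keepf := by
      intro s t hst
      have h1 : ((s : ℕ) + 1) * e ≤ (t : ℕ) * e := Nat.mul_le_mul_right e hst
      have h2 : ((s : ℕ) + 1) * e = (s : ℕ) * e + e := by ring
      have h3 : ll s < e := hll s
      rw [hkeepdef]
      show ((s : ℕ) * e + ll s) < ((t : ℕ) * e + ll t)
      omega
    have hwkeep : ∀ t, w (keepf t) = γ ^ ll t := by
      intro t
      rw [hwdef, hkeepdef]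
      show γ ^ ((t : ℕ) * e + ll t) = γ ^ ll t
      rw [pow_add, pow_mul', hγe, one_pow, one_mul]
    have hspan : LinearMap.ker ψ ≤ (⊥ : Submodule F K) ⊔
        Submodule.span F {x | ∃ j, (∀ t, keepf t ≠ j) ∧ w j = x ∧ x ∈ LinearMap.ker ψ} := by
      intro x hx
      rcases eq_or_ne x 0 with rfl | hx0
      · exact Submodule.zero_mem _
      · obtain ⟨l, hl, hγl⟩ := hpow x hx0
        have hjb : n * e + l < N + 1 := by
          have h4 : n * e + e = (n + 1) * e := by ring
          omega
        refine Submodule.mem_sup_right (Submodule.subset_span ⟨⟨n * e + l, hjb⟩, ?_, ?_, hx⟩)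
        · intro t hcon
          have h1 : (t : ℕ) * e + ll t < n * e := by
            have h2 : ((t : ℕ) + 1) * e ≤ n * e := Nat.mul_le_mul_right e t.isLt
            have h3 : ((t : ℕ) + 1) * e = (t : ℕ) * e + e := by ring
            have := hll t
            omega
          have h6 := congrArg Fin.val hcon
          rw [hkeepdef] at h6
          simp only [] at h6
          omega
        · rw [hwdef]
          show γ ^ (n * e + l) = x
          rw [pow_add, pow_mul', hγe, one_pow, one_mul, hγl]
    have hfinal : codeOf (fun t => w (keepf t)) (LinearMap.ker ψ) = C := by
      ext c
      have hmem : c ∈ codeOf (fun t => w (keepf t)) (LinearMap.ker ψ)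
          ↔ ∑ t, c t • w (keepf t) ∈ LinearMap.ker ψ := Iff.rfl
      rw [hmem, LinearMap.mem_ker, map_sum]
      have hterm : ∀ t, ψ (c t • w (keepf t)) = c t • π (Pi.single t 1) := by
        intro t
        rw [map_smul, hwkeep t, hψll t]
      rw [Finset.sum_congr rfl fun t _ => hterm t]
      have hsum : ∑ t, c t • π (Pi.single t 1) = π c := by
        have h1 : ∀ t : Fin n, c t • π (Pi.single t 1) = π (c t • (Pi.single t 1 : Fin n → F)) :=
          fun t => (map_smul π (c t) ((Pi.single t 1 : Fin n → F))).symm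
        rw [Finset.sum_congr rfl fun t _ => h1 t, ← map_sum]
        congr 1
        ext j
        rw [Finset.sum_apply]
        simp [Pi.single_apply]
      rw [hsum, hπdef, Submodule.mkQ_apply]
      exact Submodule.Quotient.mk_eq_zero C
    have hmain := master (m' + 1) w ⊥ (LinearMap.ker ψ) keepf hkmono bot_le hspan
    rw [hfinal] at hmain
    exact hmain
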